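/- Let the alphabet contain at least one letter a. The single-variable span length domination rule D_spanLen — the spanner on variables {x, x†} that on every document d captures exactly (i) the empty mapping and (ii) every mapping m with dom(m) = {x, x†} such that the length of m(x†) is at least the length of m(x) — is not a regular spanner, i.e., no sequential variable-set automaton defines it. -/

import Mathlib

namespace DocSpanners

/-- A span: a pair of endpoint positions `[i, j⟩`. -/
abbrev Span : Type := ℕ × ℕ

/-- `s` is a span of document `d`. -/
def IsSpanOf {α : Type} (d : List α) (s : Span) : Prop :=
  s.1 ≤ s.2 ∧ s.2 ≤ d.length

/-- A (schemaless) mapping over variable type `V`: a partial assignment of spans. -/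
abbrev Mapping (V : Type) : Type := V → Option Span

/-- `m` is a mapping of document `d`. -/
def MappingOf {α V : Type} (d : List α) (m : Mapping V) : Prop :=
  ∀ x s, m x = some s → IsSpanOf d s

/-- A spanner: maps documents to sets of mappings. -/
abbrev Spanner (α V : Type) : Type := List α → Set (Mapping V)

/-- Labels of a variable-set automaton: letters and variable markers. -/
inductive Label (α V : Type) : Type where
  | letter (a : α)
  | vopen (x : V)
  | vclose (x : V)
deriving DecidableEq

/-- The sequence of letters of a ref-word. -/
def letters {α V : Type} (w : List (Label α V)) : List α :=
  w.filterMap fun l => match l with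
    | Label.letter a => some a
    | _ => none

/-- A ref-word is valid if for each variable, either its markers do not appear, or
the opening and closing markers appear exactly once with the opening first. -/
def ValidRef {α V : Type} [DecidableEq α] [DecidableEq V] (w : List (Label α V)) : Prop :=
  ∀ x : V,
    (Label.vopen x ∉ w ∧ Label.vclose x ∉ w) ∨
    (w.count (Label.vopen x) = 1 ∧ w.count (Label.vclose x) = 1 ∧
      w.idxOf (Label.vopen x) < w.idxOf (Label.vclose x))

/-- The mapping defined by a (valid) ref-word: each marked variable is sent to the
span delimited by the positions at which its markers are read. -/
def refMapping {α V : Type} [DecidableEq α] [DecidableEq V] (w : List (Label α V)) :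
    Mapping V := fun x =>
  if Label.vopen x ∈ w then
    some ((letters (w.take (w.idxOf (Label.vopen x)))).length,
          (letters (w.take (w.idxOf (Label.vclose x)))).length)
  else none

/-- A variable-set automaton with state type `Q`. -/
structure VA (α V Q : Type) : Type where
  init : Q
  final : Set Q
  trans : Q → Label α V → Q → Prop

/-- Paths in a VA. -/
inductive VA.Path {α V Q : Type} (A : VA α V Q) : Q → List (Label α V) → Q → Prop where
  | nil (q : Q) : VA.Path A q [] q
  | cons {q q' q'' : Q} {l : Label α V} {w : List (Label α V)} :
      A.trans q l q' → VA.Path A q' w q'' → VA.Path A q (l :: w) q''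

/-- The VA accepts the ref-word `w` (an accepting run reads `w`). -/
def VA.AcceptsRef {α V Q : Type} (A : VA α V Q) (w : List (Label α V)) : Prop :=
  ∃ qf ∈ A.final, A.Path A.init w qf

/-- A VA is sequential if every accepting run is valid. -/
def VA.Sequential {α V Q : Type} [DecidableEq α] [DecidableEq V] (A : VA α V Q) : Prop :=
  ∀ w, A.AcceptsRef w → ValidRef w

/-- The spanner defined by a (sequential) VA. -/
def VA.spanner {α V Q : Type} [DecidableEq α] [DecidableEq V] (A : VA α V Q) :
    Spanner α V := fun d =>
  {m | ∃ w, A.AcceptsRef w ∧ letters w = d ∧ refMapping w = m}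

/-- A spanner is regular if it is defined by some sequential VA with finitely many states. -/
def IsRegular {α V : Type} [DecidableEq α] [DecidableEq V] (P : Spanner α V) : Prop :=
  ∃ (Q : Type) (_ : Fintype Q) (A : VA α V Q), A.Sequential ∧ A.spanner = P

/-- The skyline operator: keep only the mappings of `P d` that are maximal under `R d`. -/
def skyline {α V : Type} (P : Spanner α V)
    (R : List α → Mapping V → Mapping V → Prop) : Spanner α V := fun d =>
  {m | m ∈ P d ∧ ∀ m' ∈ P d, m' ≠ m → ¬ R d m m'}

/-- The variable inclusion domination relation: `m2` extends `m1`. -/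
def varIncRel {V : Type} (m1 m2 : Mapping V) : Prop :=
  ∀ x s, m1 x = some s → m2 x = some s

/-- Two mappings have the same domain. -/
def sameDom {V : Type} (m1 m2 : Mapping V) : Prop :=
  ∀ x, m1 x = none ↔ m2 x = none

/-- The span inclusion domination relation. -/
def spanIncRel {V : Type} (m1 m2 : Mapping V) : Prop :=
  sameDom m1 m2 ∧
    ∀ x s1 s2, m1 x = some s1 → m2 x = some s2 → s2.1 ≤ s1.1 ∧ s1.2 ≤ s2.2

/-- The left-to-right domination relation: same start, `m2` no shorter. -/
def ltrRel {V : Type} (m1 m2 : Mapping V) : Prop :=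
  sameDom m1 m2 ∧
    ∀ x s1 s2, m1 x = some s1 → m2 x = some s2 →
      s1.1 = s2.1 ∧ s1.2 - s1.1 ≤ s2.2 - s2.1

/-- The span length domination relation: `m2`'s spans are no shorter. -/
def spanLenRel {V : Type} (m1 m2 : Mapping V) : Prop :=
  sameDom m1 m2 ∧
    ∀ x s1 s2, m1 x = some s1 → m2 x = some s2 → s1.2 - s1.1 ≤ s2.2 - s2.1


/-- The single-variable span length domination rule, as a spanner on variables
`{x, x†}` (encoded as `Unit ⊕ Unit`, left = `x`, right = `x†`): on every document it
captures the empty mapping and every mapping assigning both variables such that the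
span of `x†` is at least as long as the span of `x`. -/
def spanLenRule (α : Type) : Spanner α (Unit ⊕ Unit) := fun d =>
  {m | (∀ y, m y = none) ∨
       (∃ s1 s2 : Span, IsSpanOf d s1 ∧ IsSpanOf d s2 ∧
          m (Sum.inl ()) = some s1 ∧ m (Sum.inr ()) = some s2 ∧
          s1.2 - s1.1 ≤ s2.2 - s2.1)}


/-! ### Auxiliary lemmas for the pumping argument -/

section Aux

variable {α V Q : Type}

lemma letters_append (u v : List (Label α V)) : letters (u ++ v) = letters u ++ letters v :=
  List.filterMap_append

/-- Number of letters among the first `i` labels of `w`. -/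
def lcount (w : List (Label α V)) (i : ℕ) : ℕ := (letters (w.take i)).length

lemma lcount_zero (w : List (Label α V)) : lcount w 0 = 0 := by
  simp [lcount, letters]

lemma lcount_add (w : List (Label α V)) (i k : ℕ) :
    lcount w (i + k) = lcount w i + (letters ((w.drop i).take k)).length := by
  simp [lcount, List.take_add, letters_append]

lemma lcount_mono (w : List (Label α V)) {i i' : ℕ} (h : i ≤ i') :
    lcount w i ≤ lcount w i' := by
  rw [show i' = i + (i' - i) by omega, lcount_add]
  omega

lemma lcount_succ_le (w : List (Label α V)) (i : ℕ) :
    lcount w (i + 1) ≤ lcount w i + 1 := by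
  rw [lcount_add]
  have h1 : (letters ((w.drop i).take 1)).length ≤ ((w.drop i).take 1).length :=
    List.length_filterMap_le _ _
  have h2 : ((w.drop i).take 1).length ≤ 1 := by
    rw [List.length_take]; omega
  omega

lemma lcount_length (w : List (Label α V)) : lcount w w.length = (letters w).length := by
  rw [lcount, List.take_length]

lemma letters_drop_length (w : List (Label α V)) {i : ℕ} (h : i ≤ w.length) :
    lcount w i + (letters (w.drop i)).length = (letters w).length := by
  have h1 := lcount_add w i (w.length - i)
  rw [show i + (w.length - i) = w.length from by omega, lcount_length] at h1
  have h2 : (w.drop i).take (w.length - i) = w.drop i := by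
    rw [← List.length_drop]; exact List.take_length
  rw [h2] at h1
  omega

lemma mem_take_of_indexOf_lt [DecidableEq α] [DecidableEq V]
    {l : Label α V} {w : List (Label α V)} {k : ℕ}
    (hm : l ∈ w) (hk : w.idxOf l < k) : l ∈ w.take k := by
  have hlt : w.idxOf l < w.length := List.idxOf_lt_length_iff.mpr hm
  have hlen : w.idxOf l < (w.take k).length := by rw [List.length_take]; omega
  have he : (w.take k)[w.idxOf l]'hlen = l := by
    rw [List.getElem_take]; exact List.getElem_idxOf hlt
  exact he ▸ List.getElem_mem hlen

lemma indexOf_append_of_not_mem {β : Type} [DecidableEq β] {l : β} {u v : List β}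
    (h : l ∉ u) : (u ++ v).idxOf l = u.length + v.idxOf l := by
  induction u with
  | nil => simp
  | cons b u ih =>
    simp only [List.mem_cons, not_or] at h
    rw [List.cons_append, List.idxOf_cons_ne _ (fun e => h.1 e.symm), ih h.2]
    simp only [List.length_cons]
    omega

lemma refMapping_of_mem [DecidableEq α] [DecidableEq V] {w : List (Label α V)} {x : V}
    (h : Label.vopen x ∈ w) :
    refMapping w x =
      some (lcount w (w.idxOf (Label.vopen x)), lcount w (w.idxOf (Label.vclose x))) := by
  simp [refMapping, h, lcount]

lemma refMapping_of_not_mem [DecidableEq α] [DecidableEq V] {w : List (Label α V)} {x : V}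
    (h : Label.vopen x ∉ w) : refMapping w x = none := by
  simp [refMapping, h]

lemma path_append {A : VA α V Q} {q q' q'' : Q} {u v : List (Label α V)}
    (h1 : A.Path q u q') (h2 : A.Path q' v q'') : A.Path q (u ++ v) q'' := by
  induction h1 with
  | nil _ => simpa using h2
  | cons ht _ ih => exact VA.Path.cons ht (ih h2)

lemma exists_stateFun {A : VA α V Q} {q0 qf : Q} {w : List (Label α V)}
    (h : A.Path q0 w qf) :
    ∃ st : ℕ → Q, ∀ i, A.Path q0 (w.take i) (st i) ∧ A.Path (st i) (w.drop i) qf := by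
  induction h with
  | nil q =>
    refine ⟨fun _ => q, fun i => ?_⟩
    simp only [List.take_nil, List.drop_nil]
    exact ⟨VA.Path.nil q, VA.Path.nil q⟩
  | @cons q q' q'' l w ht hp ih =>
    obtain ⟨st', hst'⟩ := ih
    refine ⟨fun i => match i with | 0 => q | (i' + 1) => st' i', fun i => ?_⟩
    match i with
    | 0 => exact ⟨VA.Path.nil q, VA.Path.cons ht hp⟩
    | (i' + 1) => exact ⟨VA.Path.cons ht (hst' i').1, (hst' i').2⟩

/-- Transferring a marker that occurs before the cut to the pumped word. -/
lemma small_transfer [DecidableEq α] [DecidableEq V] {w : List (Label α V)} {l : Label α V}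
    {k k' : ℕ} (hk : k ≤ k') (hk' : k' ≤ w.length) (hl : l ∈ w) (hidx : w.idxOf l < k) :
    l ∈ w.take k ++ w.drop k' ∧
    (w.take k ++ w.drop k').idxOf l = w.idxOf l ∧
    lcount (w.take k ++ w.drop k') (w.idxOf l) = lcount w (w.idxOf l) := by
  have hlu : l ∈ w.take k := mem_take_of_indexOf_lt hl hidx
  have hlen : (w.take k).length = k := by rw [List.length_take]; omega
  have hidxu : (w.take k).idxOf l = w.idxOf l := by
    conv_rhs => rw [← List.take_append_drop k w]
    rw [List.idxOf_append_of_mem hlu]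
  refine ⟨List.mem_append_left _ hlu, ?_, ?_⟩
  · rw [List.idxOf_append_of_mem hlu, hidxu]
  · have htk : (w.take k ++ w.drop k').take (w.idxOf l) = w.take (w.idxOf l) := by
      rw [List.take_append, hlen,
        show w.idxOf l - k = 0 from by omega, List.take_zero, List.append_nil,
        List.take_take, min_eq_left (le_of_lt hidx)]
    rw [lcount, lcount, htk]

/-- Transferring a marker that occurs after the cut to the pumped word. -/
lemma big_transfer [DecidableEq α] [DecidableEq V] {w : List (Label α V)} {l : Label α V}
    {k k' : ℕ} (hk : k ≤ k') (hk' : k' ≤ w.length) (hl : l ∈ w) (hidx : k' ≤ w.idxOf l) :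
    l ∈ w.take k ++ w.drop k' ∧
    lcount (w.take k ++ w.drop k') ((w.take k ++ w.drop k').idxOf l)
      ≤ lcount w k + (letters (w.drop k')).length := by
  have hlenk : (w.take k).length = k := by rw [List.length_take]; omega
  have hnotmem : ∀ k0 : ℕ, k0 ≤ w.idxOf l → l ∉ w.take k0 := by
    intro k0 hk0 hcu
    have h1 : w.idxOf l = (w.take k0).idxOf l := by
      conv_lhs => rw [← List.take_append_drop k0 w]
      rw [List.idxOf_append_of_mem hcu]
    have h2 : (w.take k0).idxOf l < (w.take k0).length := List.idxOf_lt_length_iff.mpr hcu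
    have h3 : (w.take k0).length ≤ k0 := by rw [List.length_take]; omega
    omega
  have hnotu : l ∉ w.take k := hnotmem k (by omega)
  have hlv : l ∈ w.drop k' := by
    have hl' := hl
    rw [← List.take_append_drop k' w] at hl'
    rcases List.mem_append.mp hl' with h | h
    · exact absurd h (hnotmem k' hidx)
    · exact h
  refine ⟨List.mem_append_right _ hlv, ?_⟩
  rw [indexOf_append_of_not_mem hnotu, hlenk]
  have key : lcount (w.take k ++ w.drop k') ((w.take k).length + (w.drop k').idxOf l)
      = (letters (w.take k)).length + lcount (w.drop k') ((w.drop k').idxOf l) := by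
    rw [lcount_add, List.drop_left]
    congr 1
    rw [lcount, List.take_left]
  rw [hlenk] at key
  rw [key]
  have hb : lcount (w.drop k') ((w.drop k').idxOf l) ≤ (letters (w.drop k')).length := by
    have hmono := lcount_mono (w.drop k') (List.idxOf_le_length (a := l) (l := w.drop k'))
    rwa [lcount_length] at hmono
  have : (letters (w.take k)).length = lcount w k := rfl
  omega

end Aux

/-- If the alphabet contains at least one letter, the single-variable
span length domination rule is not expressible as a regular spanner. -/
theorem spanLenRule_not_regular {α : Type} [Fintype α] [DecidableEq α] (a : α) :
    ¬ IsRegular (spanLenRule α) := by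
  rintro ⟨Q, hQ, A, hseq, hsp⟩
  haveI : Fintype Q := hQ
  set n := Fintype.card Q + 1 with hn
  -- the witness mapping x ↦ [0,n⟩, x† ↦ [n,2n⟩ on document a^{2n}
  have hspan : ∀ s t : ℕ, s ≤ t → t ≤ 2 * n →
      IsSpanOf (List.replicate (2 * n) a) (s, t) :=
    fun s t h1 h2 => ⟨h1, by rwa [List.length_replicate]⟩
  have hmem : (Sum.elim (fun _ => some ((0 : ℕ), n)) (fun _ => some (n, 2 * n)) :
      Mapping (Unit ⊕ Unit)) ∈ spanLenRule α (List.replicate (2 * n) a) := by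
    simp only [spanLenRule, Set.mem_setOf_eq]
    exact Or.inr ⟨(0, n), (n, 2 * n), hspan 0 n (by omega) (by omega),
      hspan n (2 * n) (by omega) (le_refl _), rfl, rfl, by show n - 0 ≤ 2 * n - n; omega⟩
  rw [← hsp] at hmem
  simp only [VA.spanner, Set.mem_setOf_eq] at hmem
  obtain ⟨w, hacc, hlet, hrm⟩ := hmem
  obtain ⟨qf, hqf, hpath⟩ := hacc
  -- extract marker positions from refMapping w = m
  have hval1 := congrFun hrm (Sum.inl ())
  have ho1w : (Label.vopen (Sum.inl ()) : Label α (Unit ⊕ Unit)) ∈ w := by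
    by_contra hno
    rw [refMapping_of_not_mem hno] at hval1
    simp at hval1
  rw [refMapping_of_mem ho1w] at hval1
  simp only [Sum.elim_inl, Option.some.injEq, Prod.mk.injEq] at hval1
  obtain ⟨hlc_o1, hlc_c1⟩ := hval1
  have hval2 := congrFun hrm (Sum.inr ())
  have ho2w : (Label.vopen (Sum.inr ()) : Label α (Unit ⊕ Unit)) ∈ w := by
    by_contra hno
    rw [refMapping_of_not_mem hno] at hval2
    simp at hval2
  rw [refMapping_of_mem ho2w] at hval2
  simp only [Sum.elim_inr, Option.some.injEq, Prod.mk.injEq] at hval2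
  obtain ⟨hlc_o2, hlc_c2⟩ := hval2
  -- total letter count
  have h2n : lcount w w.length = 2 * n := by
    rw [lcount_length, hlet, List.length_replicate]
  -- the close markers are in w
  have hc1w : (Label.vclose (Sum.inl ()) : Label α (Unit ⊕ Unit)) ∈ w := by
    by_contra hno
    rw [List.idxOf_eq_length_iff.mpr hno, h2n] at hlc_c1
    omega
  have hvalid := hseq w ⟨qf, hqf, hpath⟩
  have hc2w : (Label.vclose (Sum.inr ()) : Label α (Unit ⊕ Unit)) ∈ w := by
    rcases hvalid (Sum.inr ()) with ⟨hno, _⟩ | ⟨_, hcnt, _⟩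
    · exact absurd ho2w hno
    · exact List.count_pos_iff.mp (by rw [hcnt]; omega)
  -- cut positions
  have hex : ∀ j : Fin n, ∃ i, n + (j.val + 1) ≤ lcount w i := by
    intro j
    exact ⟨w.length, by rw [h2n]; have := j.isLt; omega⟩
  let p : Fin n → ℕ := fun j => Nat.find (hex j)
  have hple : ∀ j, n + (j.val + 1) ≤ lcount w (p j) := fun j => Nat.find_spec (hex j)
  have hpmin : ∀ (j : Fin n) (i : ℕ), i < p j → lcount w i < n + (j.val + 1) := by
    intro j i hi
    have := Nat.find_min (hex j) hi
    omega
  have hpval : ∀ j, lcount w (p j) = n + (j.val + 1) := by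
    intro j
    have h1 := hple j
    rcases Nat.eq_zero_or_pos (p j) with h0 | h0
    · rw [h0, lcount_zero] at h1; omega
    · have h2 := hpmin j (p j - 1) (by omega)
      have h3 := lcount_succ_le w (p j - 1)
      rw [show p j - 1 + 1 = p j from by omega] at h3
      omega
  have hpw : ∀ j, p j ≤ w.length := by
    intro j
    apply Nat.find_min' (hex j)
    rw [h2n]; have := j.isLt; omega
  have hlt_small : ∀ l : Label α (Unit ⊕ Unit), lcount w (w.idxOf l) ≤ n →
      ∀ j : Fin n, w.idxOf l < p j := by
    intro l hk j
    by_contra hc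
    push_neg at hc
    have h := lcount_mono w hc
    rw [hpval j] at h
    omega
  have hc2ge : ∀ j : Fin n, p j ≤ w.idxOf (Label.vclose (Sum.inr ()) : Label α (Unit ⊕ Unit)) := by
    intro j
    apply Nat.find_min' (hex j)
    rw [hlc_c2]; have := j.isLt; omega
  -- pigeonhole on the states at the cut positions
  obtain ⟨st, hst⟩ := exists_stateFun hpath
  obtain ⟨i, i', hne, heq⟩ :=
    Fintype.exists_ne_map_eq_of_card_lt (fun j : Fin n => st (p j))
      (by rw [Fintype.card_fin]; omega)
  have key : ∀ j j' : Fin n, j.val < j'.val → st (p j) = st (p j') → False := by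
    intro j j' hjj' hstq
    have hpjj : p j < p j' := by
      by_contra hc
      push_neg at hc
      have h := lcount_mono w hc
      rw [hpval j, hpval j'] at h
      omega
    -- the pumped ref-word
    have hpath' : A.Path A.init (w.take (p j) ++ w.drop (p j')) qf := by
      apply path_append (hst (p j)).1
      rw [hstq]
      exact (hst (p j')).2
    obtain ⟨ho1', hio1', hlc1'⟩ :=
      small_transfer (le_of_lt hpjj) (hpw j') ho1w (hlt_small (Label.vopen (Sum.inl ()) : Label α (Unit ⊕ Unit)) (by omega) j)
    obtain ⟨hc1', hic1', hlcc1'⟩ :=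
      small_transfer (le_of_lt hpjj) (hpw j') hc1w (hlt_small (Label.vclose (Sum.inl ()) : Label α (Unit ⊕ Unit)) (by omega) j)
    obtain ⟨ho2', hio2', hlco2'⟩ :=
      small_transfer (le_of_lt hpjj) (hpw j') ho2w (hlt_small (Label.vopen (Sum.inr ()) : Label α (Unit ⊕ Unit)) (by omega) j)
    obtain ⟨hc2', hlcc2'⟩ :=
      big_transfer (le_of_lt hpjj) (hpw j') hc2w (hc2ge j')
    have hval1' : refMapping (w.take (p j) ++ w.drop (p j')) (Sum.inl ()) = some (0, n) := by
      rw [refMapping_of_mem ho1', hio1', hic1', hlc1', hlcc1', hlc_o1, hlc_c1]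
    have hval2' : refMapping (w.take (p j) ++ w.drop (p j')) (Sum.inr ()) =
        some (n, lcount (w.take (p j) ++ w.drop (p j'))
          ((w.take (p j) ++ w.drop (p j')).idxOf (Label.vclose (Sum.inr ()) : Label α (Unit ⊕ Unit)))) := by
      rw [refMapping_of_mem ho2', hio2', hlco2', hlc_o2]
    have hmem' : refMapping (w.take (p j) ++ w.drop (p j')) ∈
        spanLenRule α (letters (w.take (p j) ++ w.drop (p j'))) := by
      rw [← hsp]
      simp only [VA.spanner, Set.mem_setOf_eq]
      exact ⟨w.take (p j) ++ w.drop (p j'), ⟨qf, hqf, hpath'⟩, rfl, rfl⟩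
    simp only [spanLenRule, Set.mem_setOf_eq] at hmem'
    rcases hmem' with hemp | ⟨s1, s2, _, _, hs1, hs2, hle⟩
    · have h := hemp (Sum.inl ())
      rw [hval1'] at h
      exact Option.some_ne_none _ h
    · rw [hval1'] at hs1
      rw [hval2'] at hs2
      obtain rfl := Option.some.inj hs1
      obtain rfl := Option.some.inj hs2
      have hle' : n - 0 ≤ lcount (w.take (p j) ++ w.drop (p j'))
          ((w.take (p j) ++ w.drop (p j')).idxOf (Label.vclose (Sum.inr ()) : Label α (Unit ⊕ Unit))) - n := hle
      have hX := letters_drop_length w (hpw j')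
      rw [hlet, List.length_replicate, hpval j'] at hX
      rw [hpval j] at hlcc2'
      have hjn := j'.isLt
      omega
  have hvne : i.val ≠ i'.val := fun h => hne (Fin.ext h)
  rcases Nat.lt_or_ge i.val i'.val with h | h
  · exact key i i' h heq
  · exact key i' i (by omega) heq.symm

end DocSpanners
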